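/- For all integers m1 ≥ 2 and m2 ≥ 1, ∫₀^{π/4} sin^{m1}(2x)·cos^{m2}(2x) / sin²(x) dx = ((m1+m2)/(m1−1)) · (1 + S(m1, m2)) · ∫₀^{π/2} sin^{m1}(x)·cos^{m2}(x) dx. -/

import Mathlib

open Real

/-- For positive integers `m1, m2`, the ratio
`S(m1, m2) = Γ((m2+2)/2)·Γ((m1+m2)/2) / (Γ((m2+1)/2)·Γ((m1+m2+1)/2))`. -/
noncomputable def S (m1 m2 : ℕ) : ℝ :=
  Real.Gamma (((m2 : ℝ) + 2) / 2) * Real.Gamma (((m1 : ℝ) + m2) / 2) /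
    (Real.Gamma (((m2 : ℝ) + 1) / 2) * Real.Gamma (((m1 : ℝ) + m2 + 1) / 2))

/-- The Wallis-type integral `∫₀^{π/2} sin^a x cos^b x dx`. -/
noncomputable def T (a b : ℕ) : ℝ := ∫ x in (0:ℝ)..(π/2), sin x ^ a * cos x ^ b

/-- The Gamma-function formula for that integral. -/
noncomputable def G (x y : ℝ) : ℝ :=
  Gamma ((x+1)/2) * Gamma ((y+1)/2) / (2 * Gamma ((x+y+2)/2))

lemma T_intble (a b : ℕ) (c d : ℝ) :
    IntervalIntegrable (fun x => sin x ^ a * cos x ^ b) MeasureTheory.volume c d :=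
  ((continuous_sin.pow a).mul (continuous_cos.pow b)).intervalIntegrable c d

lemma T_rec (a b : ℕ) : ((a:ℝ) + b + 2) * T (a+2) b = ((a:ℝ) + 1) * T a b := by
  have key : (∫ x in (0:ℝ)..(π/2),
      (((b:ℝ)+1) * (sin x ^ (a+2) * cos x ^ b) - ((a:ℝ)+1) * (sin x ^ a * cos x ^ (b+2)))) = 0 := by
    have h : ∀ x ∈ Set.uIcc (0:ℝ) (π/2), HasDerivAt (fun x => -(sin x ^ (a+1) * cos x ^ (b+1)))
        (((b:ℝ)+1) * (sin x ^ (a+2) * cos x ^ b) - ((a:ℝ)+1) * (sin x ^ a * cos x ^ (b+2))) x := by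
      intro x _
      have h1 := ((Real.hasDerivAt_sin x).fun_pow (a+1)).fun_mul ((Real.hasDerivAt_cos x).fun_pow (b+1))
      have h2 := h1.fun_neg
      refine h2.congr_deriv ?_
      push_cast
      ring
    have hint : IntervalIntegrable (fun x => ((b:ℝ)+1) * (sin x ^ (a+2) * cos x ^ b)
        - ((a:ℝ)+1) * (sin x ^ a * cos x ^ (b+2))) MeasureTheory.volume 0 (π/2) :=
      ((continuous_const.mul ((continuous_sin.pow _).mul (continuous_cos.pow _))).sub
        (continuous_const.mul ((continuous_sin.pow _).mul (continuous_cos.pow _)))).intervalIntegrable _ _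
    rw [intervalIntegral.integral_eq_sub_of_hasDerivAt h hint]
    simp [Real.cos_pi_div_two, Real.sin_pi_div_two, zero_pow, Nat.succ_ne_zero]
  have hsplit : (∫ x in (0:ℝ)..(π/2), sin x ^ a * cos x ^ (b+2))
      = T a b - T (a+2) b := by
    rw [show T a b - T (a+2) b = ∫ x in (0:ℝ)..(π/2),
        (sin x ^ a * cos x ^ b - sin x ^ (a+2) * cos x ^ b) from
      (intervalIntegral.integral_sub (T_intble a b 0 (π/2)) (T_intble (a+2) b 0 (π/2))).symm]
    apply intervalIntegral.integral_congr
    intro x _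
    linear_combination (sin x ^ a * cos x ^ b) * (Real.sin_sq_add_cos_sq x)
  rw [intervalIntegral.integral_sub ((T_intble (a+2) b 0 (π/2)).const_mul _)
      ((T_intble a (b+2) 0 (π/2)).const_mul _),
    intervalIntegral.integral_const_mul, intervalIntegral.integral_const_mul,
    hsplit, sub_eq_zero] at key
  have : ((b:ℝ)+1) * T (a+2) b = ((a:ℝ)+1) * (T a b - T (a+2) b) := key
  unfold T at *
  linarith

lemma T_symm (a b : ℕ) : T a b = T b a := by
  unfold T
  rw [show (∫ x in (0:ℝ)..(π/2), sin x ^ b * cos x ^ a)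
      = ∫ x in (0:ℝ)..(π/2), sin (π/2 - x) ^ a * cos (π/2 - x) ^ b from ?_]
  · rw [intervalIntegral.integral_comp_sub_left (fun x => sin x ^ a * cos x ^ b) (π/2)]
    norm_num
  · apply intervalIntegral.integral_congr
    intro x _
    simp only [Real.sin_pi_div_two_sub, Real.cos_pi_div_two_sub]
    ring

lemma T_rec' (a b : ℕ) : ((a:ℝ) + b + 2) * T a (b+2) = ((b:ℝ) + 1) * T a b := by
  have h := T_rec b a
  rw [T_symm a (b+2), T_symm a b]
  linarith

lemma gamma_step (c : ℝ) (hc : 0 < c) : Gamma ((c+2)/2) = c/2 * Gamma (c/2) := by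
  rw [show (c+2)/2 = c/2 + 1 by ring, Real.Gamma_add_one (by positivity)]

lemma G_symm (x y : ℝ) : G x y = G y x := by
  unfold G
  rw [show x + y = y + x by ring]
  ring

lemma G_step (x y : ℝ) (hx : 0 < x + 1) (hy : 0 < y + 1) :
    G x (y + 2) = ((y+1)/(x+y+2)) * G x y := by
  unfold G
  rw [show (y+2+1)/2 = ((y+1)+2)/2 by ring, gamma_step _ hy,
    show (x+(y+2)+2)/2 = ((x+y+2)+2)/2 by ring, gamma_step _ (by linarith)]
  have h1 : Gamma ((x+y+2)/2) ≠ 0 := (Real.Gamma_pos_of_pos (div_pos (by linarith) two_pos)).ne'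
  field_simp

lemma T_step_b (a b : ℕ) (ih : T a b = G a b) : T a (b+2) = G (a:ℝ) ((b:ℝ)+2) := by
  have h := T_rec' a b
  rw [ih] at h
  rw [G_step _ _ (by positivity) (by positivity)]
  have hne : ((a:ℝ)+b+2) ≠ 0 := by positivity
  field_simp at h ⊢
  linarith

lemma sqrtpi_ne : Real.sqrt π ≠ 0 := (Real.sqrt_pos.mpr pi_pos).ne'

lemma gamma_three_half : Gamma ((3:ℝ)/2) = Real.sqrt π / 2 := by
  rw [show (3:ℝ)/2 = (1+2)/2 by norm_num, gamma_step 1 one_pos]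
  norm_num [Real.Gamma_one_half_eq]
  ring

lemma T_eq_Gamma (a b : ℕ) : T a b = G a b := by
  have base : ∀ b : ℕ, T 0 b = G 0 b ∧ T 1 b = G 1 b := by
    intro b
    induction b using Nat.twoStepInduction with
    | zero =>
      constructor
      · rw [show T 0 0 = π/2 by simp [T]]
        simp only [G]
        norm_num [Real.Gamma_one, Real.Gamma_one_half_eq]
        rw [Real.mul_self_sqrt pi_pos.le]
      · rw [show T 1 0 = 1 by simp [T]]
        simp only [G]
        norm_num [Real.Gamma_one, Real.Gamma_one_half_eq, gamma_three_half]
        field_simp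
    | one =>
      constructor
      · rw [show T 0 1 = 1 by simp [T]]
        simp only [G]
        norm_num [Real.Gamma_one, Real.Gamma_one_half_eq, gamma_three_half]
        field_simp
      · rw [show T 1 1 = 1/2 by simp [T]]
        simp only [G]
        norm_num [Real.Gamma_one, show (4:ℝ)/2 = (2+2)/2 by norm_num,
          gamma_step 2 two_pos, Real.Gamma_two]
    | more b ih _ =>
      constructor
      · have := T_step_b 0 b (by exact_mod_cast ih.1)
        push_cast at this ⊢
        convert this using 3
      · have := T_step_b 1 b (by exact_mod_cast ih.2)
        push_cast at this ⊢
        convert this using 3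
  induction a using Nat.twoStepInduction with
  | zero => exact_mod_cast (base b).1
  | one => exact_mod_cast (base b).2
  | more a ih _ =>
    have h1 : T b a = G b a := (T_symm b a).trans (ih.trans (G_symm _ _))
    have h2 := T_step_b b a h1
    push_cast at h2 ⊢
    rw [T_symm, h2, G_symm]

set_option maxHeartbeats 1600000 in
/-- for all integers `m1 ≥ 2`, `m2 ≥ 1`,
`∫₀^{π/4} sin^{m1}(2x)·cos^{m2}(2x)/sin²x dx
  = ((m1+m2)/(m1−1))·(1 + S(m1, m2))·∫₀^{π/2} sin^{m1}x·cos^{m2}x dx`. -/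
theorem integral_K1_eq_S_mul_G (m1 m2 : ℕ) (hm1 : 2 ≤ m1) (hm2 : 1 ≤ m2) :
    ∫ x in (0 : ℝ)..(Real.pi / 4),
        Real.sin (2 * x) ^ m1 * Real.cos (2 * x) ^ m2 / Real.sin x ^ 2 =
      (((m1 : ℝ) + m2) / ((m1 : ℝ) - 1)) * (1 + S m1 m2) *
        ∫ x in (0 : ℝ)..(Real.pi / 2), Real.sin x ^ m1 * Real.cos x ^ m2 := by
  obtain ⟨a, rfl⟩ := Nat.exists_eq_add_of_le hm1
  -- Step 1: rewrite the integrand a.e.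
  have step1 : (∫ x in (0 : ℝ)..(π / 4),
        sin (2 * x) ^ (2+a) * cos (2 * x) ^ m2 / sin x ^ 2)
      = ∫ x in (0 : ℝ)..(π / 4),
        2 * (sin (2*x) ^ a * (cos (2*x) ^ m2 + cos (2*x) ^ (m2+1))) := by
    apply intervalIntegral.integral_congr_ae
    filter_upwards with x hx
    rw [Set.uIoc_of_le (by positivity)] at hx
    have hs : sin x ≠ 0 :=
      (Real.sin_pos_of_pos_of_lt_pi hx.1 (lt_of_le_of_lt hx.2 (by linarith [pi_pos]))).ne'
    simp only [Real.sin_two_mul, Real.cos_two_mul]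
    field_simp
    ring
  rw [step1]
  -- Step 2: substitution u = 2x
  have step2 : (∫ x in (0 : ℝ)..(π / 4),
        2 * (sin (2*x) ^ a * (cos (2*x) ^ m2 + cos (2*x) ^ (m2+1))))
      = ∫ u in (0 : ℝ)..(π / 2),
        (sin u ^ a * (cos u ^ m2 + cos u ^ (m2+1))) := by
    have h := intervalIntegral.integral_comp_mul_left
      (f := fun u => 2 * (sin u ^ a * (cos u ^ m2 + cos u ^ (m2+1))))
      (a := (0:ℝ)) (b := π/4) (c := 2) two_ne_zero
    rw [h, show (2:ℝ) * (π/4) = π/2 by ring, show (2:ℝ) * 0 = 0 by ring,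
      intervalIntegral.integral_const_mul]
    rw [smul_eq_mul]
    ring
  rw [step2]
  -- Step 3: split into two Wallis integrals
  have step3 : (∫ u in (0 : ℝ)..(π / 2),
        (sin u ^ a * (cos u ^ m2 + cos u ^ (m2+1)))) = T a m2 + T a (m2+1) := by
    simp only [mul_add]
    rw [intervalIntegral.integral_add (T_intble a m2 _ _) (T_intble a (m2+1) _ _)]
    rfl
  rw [step3, show (∫ x in (0 : ℝ)..(π / 2), sin x ^ (2+a) * cos x ^ m2) = T (2+a) m2 from rfl,
    T_eq_Gamma, T_eq_Gamma, T_eq_Gamma]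
  unfold G S
  push_cast
  ring_nf
  have e1 : Gamma (3/2 + (a:ℝ)*(1/2)) = (((a:ℝ)+1)/2) * Gamma (1/2 + (a:ℝ)*(1/2)) := by
    rw [show (3:ℝ)/2 + (a:ℝ)*(1/2) = (((a:ℝ)+1)+2)/2 by ring, gamma_step _ (by positivity),
        show ((a:ℝ)+1)/2 = 1/2 + (a:ℝ)*(1/2) by ring]
  have e2 : Gamma (2 + (a:ℝ)*(1/2) + (m2:ℝ)*(1/2))
      = (((a:ℝ)+(m2:ℝ)+2)/2) * Gamma (1 + (a:ℝ)*(1/2) + (m2:ℝ)*(1/2)) := by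
    rw [show (2:ℝ) + (a:ℝ)*(1/2) + (m2:ℝ)*(1/2) = (((a:ℝ)+(m2:ℝ)+2)+2)/2 by ring,
        gamma_step _ (by positivity),
        show ((a:ℝ)+(m2:ℝ)+2)/2 = 1 + (a:ℝ)*(1/2) + (m2:ℝ)*(1/2) by ring]
  rw [e1, e2]
  have hB : Gamma (1/2 + (m2:ℝ)*(1/2)) ≠ 0 := (Real.Gamma_pos_of_pos (by positivity)).ne'
  have hD : Gamma (1 + (a:ℝ)*(1/2) + (m2:ℝ)*(1/2)) ≠ 0 :=
    (Real.Gamma_pos_of_pos (by positivity)).ne'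
  have hE : Gamma (3/2 + (a:ℝ)*(1/2) + (m2:ℝ)*(1/2)) ≠ 0 :=
    (Real.Gamma_pos_of_pos (by positivity)).ne'
  have ha1 : (1:ℝ) + (a:ℝ) ≠ 0 := by positivity
  field_simp
  ring
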